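/- For any subset A of ℝ, if K is a compact subset of the Hattori space (ℝ, τ_A), then K ∩ (ℝ\A) is countable. -/

import Mathlib

open Set

/-- The Hattori topology on ℝ: points of `A` have Euclidean neighborhood base
`(x-ε, x+ε)`, points outside `A` have Sorgenfrey neighborhood base `[x, x+ε)`. -/
def hattori (A : Set ℝ) : TopologicalSpace ℝ where
  IsOpen U := ∀ x ∈ U, ∃ ε > (0 : ℝ),
    (x ∈ A → Ioo (x - ε) (x + ε) ⊆ U) ∧ (x ∉ A → Ico x (x + ε) ⊆ U)
  isOpen_univ := fun x _ => ⟨1, one_pos, fun _ => subset_univ _, fun _ => subset_univ _⟩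
  isOpen_inter := by
    intro U V hU hV x hx
    obtain ⟨ε₁, hε₁, h₁, h₁'⟩ := hU x hx.1
    obtain ⟨ε₂, hε₂, h₂, h₂'⟩ := hV x hx.2
    have l1 := min_le_left ε₁ ε₂
    have l2 := min_le_right ε₁ ε₂
    refine ⟨min ε₁ ε₂, lt_min hε₁ hε₂, fun hA => ?_, fun hA => ?_⟩
    · intro y hy
      exact ⟨h₁ hA ⟨by linarith [hy.1], by linarith [hy.2]⟩,
             h₂ hA ⟨by linarith [hy.1], by linarith [hy.2]⟩⟩
    · intro y hy
      exact ⟨h₁' hA ⟨hy.1, by linarith [hy.2]⟩, h₂' hA ⟨hy.1, by linarith [hy.2]⟩⟩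
  isOpen_sUnion := by
    intro S hS x hx
    obtain ⟨U, hU, hxU⟩ := hx
    obtain ⟨ε, hε, h, h'⟩ := hS U hU x hxU
    exact ⟨ε, hε, fun hA => (h hA).trans (subset_sUnion_of_mem hU),
      fun hA => (h' hA).trans (subset_sUnion_of_mem hU)⟩

/-- The Sorgenfrey (lower limit) topology on ℝ. -/
def sorgenfrey : TopologicalSpace ℝ :=
  TopologicalSpace.generateFrom {S | ∃ a b : ℝ, S = Ico a b}

lemma hattori_isOpen_Iio (A : Set ℝ) (a : ℝ) : @IsOpen ℝ (hattori A) (Iio a) := by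
  intro y hy
  refine ⟨a - y, by simpa using hy, fun _ z hz => ?_, fun _ z hz => ?_⟩
  · exact lt_of_lt_of_le hz.2 (by linarith)
  · exact lt_of_lt_of_le hz.2 (by linarith)

lemma hattori_isOpen_Ici (A : Set ℝ) (x : ℝ) (hx : x ∉ A) :
    @IsOpen ℝ (hattori A) (Ici x) := by
  intro y hy
  by_cases hyA : y ∈ A
  · have hxy : x < y := lt_of_le_of_ne hy (fun h => hx (h ▸ hyA))
    exact ⟨y - x, by linarith, fun _ z hz => le_of_lt (show x < z by linarith [hz.1]),
      fun h => absurd hyA h⟩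
  · exact ⟨1, one_pos, fun h => absurd h hyA, fun _ z hz => le_trans hy hz.1⟩

lemma hattori_gap (A K : Set ℝ) (hK : @IsCompact ℝ (hattori A) K)
    (x : ℝ) (hxK : x ∈ K) (hxA : x ∉ A) :
    ∃ ε > (0:ℝ), Ioo (x - ε) x ∩ K = ∅ := by
  by_contra h
  push_neg at h
  have hne : ∀ ε > (0:ℝ), (Ioo (x - ε) x ∩ K).Nonempty := h
  -- cover
  set g : Option ℝ → ℝ := fun i => i.elim (x - 1) (fun t => if t < x then (t + x) / 2 else x - 1)
    with hg
  have hglt : ∀ i, g i < x := by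
    rintro (_ | t)
    · simp [hg]
    · simp only [hg, Option.elim]
      split <;> linarith
  set U : Option ℝ → Set ℝ := fun i => i.elim (Ici x) (fun t => Iio (g (some t))) with hU
  have hopen : ∀ i, @IsOpen ℝ (hattori A) (U i) := by
    rintro (_ | t)
    · exact hattori_isOpen_Ici A x hxA
    · exact hattori_isOpen_Iio A _
  have hcover : K ⊆ ⋃ i, U i := by
    intro y _
    rcases le_or_gt x y with hxy | hxy
    · exact mem_iUnion.mpr ⟨none, hxy⟩
    · refine mem_iUnion.mpr ⟨some y, ?_⟩
      simp only [hU, Option.elim, hg, if_pos hxy, mem_Iio]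
      linarith
  obtain ⟨s, hs⟩ := @IsCompact.elim_finite_subcover ℝ (hattori A) K (Option ℝ) hK U hopen hcover
  set B : Finset ℝ := insert (x - 1) (s.image g) with hB
  have hBne : B.Nonempty := ⟨x - 1, Finset.mem_insert_self _ _⟩
  set c := B.max' hBne with hc
  have hcx : c < x := by
    have hm : c ∈ B := B.max'_mem hBne
    rcases Finset.mem_insert.mp hm with h1 | h1
    · rw [h1]; linarith
    · obtain ⟨i, _, hi⟩ := Finset.mem_image.mp h1
      rw [← hi]; exact hglt i
  obtain ⟨y, hy1, hy2⟩ := hne (x - c) (by linarith)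
  have hyc : c < y := by have := hy1.1; linarith
  have hyx : y < x := hy1.2
  obtain ⟨i, his, hiy⟩ := mem_iUnion₂.mp (hs hy2)
  rcases i with _ | t
  · exact absurd hiy (by simp [hU]; linarith)
  · have : g (some t) ≤ c := B.le_max' _ (Finset.mem_insert_of_mem (Finset.mem_image_of_mem g his))
    have : y < c := lt_of_lt_of_le hiy this
    linarith

theorem stmt11 (A K : Set ℝ) (hK : @IsCompact ℝ (hattori A) K) :
    (K ∩ Aᶜ).Countable := by
  have key : ∀ x : (K ∩ Aᶜ : Set ℝ), ∃ q : ℚ, (q:ℝ) < (x:ℝ) ∧ Ioo (q:ℝ) (x:ℝ) ∩ K = ∅ := by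
    rintro ⟨x, hxK, hxA⟩
    obtain ⟨ε, hε, hgap⟩ := hattori_gap A K hK x hxK hxA
    obtain ⟨q, hq1, hq2⟩ := exists_rat_btwn (show x - ε < x by linarith)
    refine ⟨q, hq2, ?_⟩
    apply Set.eq_empty_of_subset_empty
    rw [← hgap]
    exact inter_subset_inter_left _ (Ioo_subset_Ioo (le_of_lt hq1) le_rfl)
  choose f hf1 hf2 using key
  have hinj : Function.Injective f := by
    rintro ⟨x, hx⟩ ⟨y, hy⟩ hfxy
    rcases lt_trichotomy x y with h | h | h
    · exfalso
      have hxnot : x ∉ Ioo ((f ⟨y, hy⟩ : ℝ)) y ∩ K := by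
        rw [hf2 ⟨y, hy⟩]; exact notMem_empty x
      have : x ≤ (f ⟨y, hy⟩ : ℝ) := by
        by_contra hc
        exact hxnot ⟨⟨lt_of_not_ge hc, h⟩, hx.1⟩
      have := hf1 ⟨x, hx⟩
      rw [hfxy] at this
      linarith
    · exact Subtype.ext h
    · exfalso
      have hynot : y ∉ Ioo ((f ⟨x, hx⟩ : ℝ)) x ∩ K := by
        rw [hf2 ⟨x, hx⟩]; exact notMem_empty y
      have : y ≤ (f ⟨x, hx⟩ : ℝ) := by
        by_contra hc
        exact hynot ⟨⟨lt_of_not_ge hc, h⟩, hy.1⟩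
      have := hf1 ⟨y, hy⟩
      rw [← hfxy] at this
      linarith
  have : Countable (K ∩ Aᶜ : Set ℝ) := hinj.countable
  exact Set.countable_coe_iff.mp this
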